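/- Stopping-time Chernoff bound (Lemma B.1): let (Ω, F, P) be a probability space with a filtration (F_n)_{n≥0}, let c > 0, and let (x_n)_{n≥1} and (y_n)_{n≥1} be real-valued processes such that for every n ≥ 1, x_n and y_n are F_n-measurable, x_n ∈ [0, c] and y_n ∈ [0, c] almost surely, and E[x_n | F_{n−1}] ≤ E[y_n | F_{n−1}] almost surely. Then for every ε ∈ (0,1) and every μ > 0: P( there exists n ≥ 1 such that Σ_{t=1}^{n} x_t/(1+ε) − Σ_{t=1}^{n} y_t/(1−ε) ≥ ε·μ·c ) ≤ exp(−ε²·μ). -/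

import Mathlib

open MeasureTheory Finset

lemma ville_ineq {Ω : Type*} {m0 : MeasurableSpace Ω} (P : Measure Ω) [IsProbabilityMeasure P]
    (ℱ : Filtration ℕ m0) {M : ℕ → Ω → ℝ} (hM : Supermartingale M ℱ P)
    (hnn : ∀ n, 0 ≤ᵐ[P] M n) (h0 : ∫ ω, M 0 ω ∂P ≤ 1) {A : ℝ} (hA : 0 < A) :
    P {ω | ∃ n, A ≤ M n ω} ≤ ENNReal.ofReal (1 / A) := by
  have hmeask : ∀ k, MeasurableSet {ω | A ≤ M k ω} := fun k =>
    measurableSet_le measurable_const ((hM.stronglyMeasurable k).measurable.le (ℱ.le k))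
  have hset : {ω | ∃ n, A ≤ M n ω} = ⋃ N, {ω : Ω | ∃ k ≤ N, A ≤ M k ω} := by
    ext ω
    simp only [Set.mem_setOf_eq, Set.mem_iUnion]
    constructor
    · rintro ⟨n, hn⟩; exact ⟨n, n, le_rfl, hn⟩
    · rintro ⟨N, k, _, hk⟩; exact ⟨k, hk⟩
  have hmono : Monotone fun N => {ω : Ω | ∃ k ≤ N, A ≤ M k ω} := by
    intro a b hab ω hω
    obtain ⟨k, hk, h⟩ := hω
    exact ⟨k, hk.trans hab, h⟩
  rw [hset, hmono.measure_iUnion]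
  refine iSup_le fun N => ?_
  set S := {ω : Ω | ∃ k ≤ N, A ≤ M k ω} with hS
  have hSmeas : MeasurableSet S := by
    have : S = ⋃ k, ⋃ _ : k ≤ N, {ω | A ≤ M k ω} := by
      ext ω; simp [hS]
    rw [this]
    exact MeasurableSet.iUnion fun k => MeasurableSet.iUnion fun _ => hmeask k
  set τ : Ω → WithTop ℕ := fun ω => (hittingBtwn M (Set.Ici A) 0 N ω : ℕ) with hτdef
  have hτ : IsStoppingTime ℱ τ :=
    hM.stronglyAdapted.adapted.isStoppingTime_hittingBtwn measurableSet_Ici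
  have hτle : ∀ ω, τ ω ≤ N := fun ω => WithTop.coe_le_coe.mpr (hittingBtwn_le ω)
  have hint : Integrable (stoppedValue M τ) P :=
    integrable_stoppedValue ℕ hτ hM.integrable hτle
  have hv : ∀ ω ∈ S, A ≤ stoppedValue M τ ω := by
    intro ω hω
    obtain ⟨k, hk, h⟩ := hω
    exact stoppedValue_hittingBtwn_mem ⟨k, ⟨Nat.zero_le _, hk⟩, h⟩
  have hstep1 : A * (P S).toReal ≤ ∫ ω in S, stoppedValue M τ ω ∂P := by
    have h := setIntegral_ge_of_const_le hSmeas (measure_ne_top _ _) hv hint.integrableOn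
    rw [smul_eq_mul, measureReal_def] at h
    linarith
  have hnn' : 0 ≤ᵐ[P] stoppedValue M τ := by
    have h := (ae_all_iff).2 hnn
    filter_upwards [h] with ω hω
    exact hω _
  have hstep2 : ∫ ω in S, stoppedValue M τ ω ∂P ≤ ∫ ω, stoppedValue M τ ω ∂P :=
    setIntegral_le_integral hint hnn'
  have hstep3 : ∫ ω, stoppedValue M τ ω ∂P ≤ ∫ ω, M 0 ω ∂P := by
    have h : ∫ ω, -(M 0 ω) ∂P ≤ ∫ ω, -(stoppedValue M τ ω) ∂P :=
      hM.neg.expected_stoppedValue_mono (isStoppingTime_const ℱ 0) hτ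
        (fun ω => WithTop.coe_le_coe.mpr (Nat.zero_le _)) hτle
    rw [integral_neg, integral_neg] at h
    linarith
  have hfinal : A * (P S).toReal ≤ 1 := le_trans hstep1 (le_trans hstep2 (le_trans hstep3 h0))
  rw [ENNReal.le_ofReal_iff_toReal_le (measure_ne_top _ _) (by positivity)]
  rw [le_div_iff₀ hA]
  linarith

lemma exp_le_affine {θ u : ℝ} (h0 : 0 ≤ u) (h1 : u ≤ 1) :
    Real.exp (θ * u) ≤ 1 + (Real.exp θ - 1) * u := by
  have h := convexOn_exp.2 (Set.mem_univ (0 : ℝ)) (Set.mem_univ θ)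
    (by linarith : (0:ℝ) ≤ 1 - u) h0 (by ring)
  simp only [smul_eq_mul, mul_zero, zero_add, Real.exp_zero] at h
  rw [mul_comm u θ] at h
  linarith

set_option maxHeartbeats 1000000 in
/-- Lemma B.1: stopping-time Chernoff bound. -/
theorem stmt5
    {Ω : Type*} {m0 : MeasurableSpace Ω}
    (P : Measure Ω) [IsProbabilityMeasure P]
    (ℱ : Filtration ℕ m0)
    (c : ℝ) (hc : 0 < c)
    (x y : ℕ → Ω → ℝ)
    (hxm : ∀ n, 1 ≤ n → Measurable[ℱ n] (x n))
    (hym : ∀ n, 1 ≤ n → Measurable[ℱ n] (y n))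
    (hxb : ∀ n, 1 ≤ n → ∀ᵐ ω ∂P, x n ω ∈ Set.Icc 0 c)
    (hyb : ∀ n, 1 ≤ n → ∀ᵐ ω ∂P, y n ω ∈ Set.Icc 0 c)
    (hcond : ∀ n, 1 ≤ n → ∀ᵐ ω ∂P, (P[x n|ℱ (n - 1)]) ω ≤ (P[y n|ℱ (n - 1)]) ω)
    (ε μ : ℝ) (hε : ε ∈ Set.Ioo (0 : ℝ) 1) (hμ : 0 < μ) :
    P { ω | ∃ n, 1 ≤ n ∧
        (∑ t ∈ Finset.Icc 1 n, x t ω) / (1 + ε)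
          - (∑ t ∈ Finset.Icc 1 n, y t ω) / (1 - ε) ≥ ε * μ * c } ≤
      ENNReal.ofReal (Real.exp (-(ε ^ 2 * μ))) := by
  obtain ⟨hε0, hε1⟩ := hε
  have h1ε : (0:ℝ) < 1 + ε := by linarith
  have h1mε : (0:ℝ) < 1 - ε := by linarith
  have hlog : 0 < Real.log (1 + ε) := Real.log_pos (by linarith)
  set L : ℝ := (1 + ε) * Real.log (1 + ε) with hLdef
  have hL : 0 < L := mul_pos h1ε hlog
  have hlog_ge : ε / (1 + ε) ≤ Real.log (1 + ε) := by
    have h := Real.log_le_sub_one_of_pos (show (0:ℝ) < (1+ε)⁻¹ by positivity)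
    rw [Real.log_inv] at h
    have he : (1 + ε)⁻¹ - 1 = -(ε / (1 + ε)) := by field_simp; ring
    rw [he] at h
    linarith
  have hεL : ε ≤ L := by
    have h := mul_le_mul_of_nonneg_left hlog_ge h1ε.le
    have he : (1 + ε) * (ε / (1 + ε)) = ε := by field_simp
    rw [hLdef]; linarith [he ▸ h]
  have hkey : Real.exp (-(L / (1 - ε))) ≤ 1 - ε := by
    have h := Real.log_le_sub_one_of_pos (show (0:ℝ) < (1-ε)⁻¹ by positivity)
    rw [Real.log_inv] at h
    have he : (1 - ε)⁻¹ - 1 = ε / (1 - ε) := by field_simp; ring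
    rw [he] at h
    have h2 : -Real.log (1 - ε) ≤ L / (1 - ε) := by
      have : ε / (1 - ε) ≤ L / (1 - ε) := by gcongr
      linarith
    calc Real.exp (-(L / (1 - ε))) ≤ Real.exp (Real.log (1 - ε)) :=
          Real.exp_le_exp.mpr (by linarith)
      _ = 1 - ε := Real.exp_log h1mε
  -- the exponential process
  set p : ℝ := Real.log (1 + ε) / c with hpdef
  set q : ℝ := -(L / ((1 - ε) * c)) with hqdef
  set g : ℕ → Ω → ℝ := fun n ω =>
    (L / c) * ((∑ t ∈ Finset.Icc 1 n, x t ω) / (1 + ε)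
      - (∑ t ∈ Finset.Icc 1 n, y t ω) / (1 - ε)) with hgdef
  set M : ℕ → Ω → ℝ := fun n ω => Real.exp (g n ω) with hMdef
  -- measurability
  have hgm : ∀ n, Measurable[ℱ n] (g n) := by
    intro n
    have hxs : Measurable[ℱ n] fun ω => ∑ t ∈ Finset.Icc 1 n, x t ω :=
      Finset.measurable_sum _ fun t ht => by
        have h1 := (Finset.mem_Icc.mp ht).1
        have h2 := (Finset.mem_Icc.mp ht).2
        exact (hxm t h1).le (ℱ.mono h2)
    have hys : Measurable[ℱ n] fun ω => ∑ t ∈ Finset.Icc 1 n, y t ω :=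
      Finset.measurable_sum _ fun t ht => by
        have h1 := (Finset.mem_Icc.mp ht).1
        have h2 := (Finset.mem_Icc.mp ht).2
        exact (hym t h1).le (ℱ.mono h2)
    exact ((hxs.div_const _).sub (hys.div_const _)).const_mul _
  have hMm : ∀ n, Measurable[ℱ n] (M n) := fun n =>
    Real.measurable_exp.comp (hgm n)
  have hadp : StronglyAdapted ℱ M := fun n => (hMm n).stronglyMeasurable
  -- a.e. bound on g n
  have hgb : ∀ n, ∀ᵐ ω ∂P, g n ω ≤ L * n / (1 + ε) := by
    intro n
    have hall : ∀ᵐ ω ∂P, ∀ t, 1 ≤ t → x t ω ∈ Set.Icc 0 c ∧ y t ω ∈ Set.Icc 0 c := by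
      rw [ae_all_iff]
      intro t
      by_cases ht : 1 ≤ t
      · filter_upwards [hxb t ht, hyb t ht] with ω h1 h2 _
        exact ⟨h1, h2⟩
      · filter_upwards with ω h
        exact absurd h ht
    filter_upwards [hall] with ω hω
    have hsx : (∑ t ∈ Finset.Icc 1 n, x t ω) ≤ n * c := by
      calc (∑ t ∈ Finset.Icc 1 n, x t ω) ≤ ∑ t ∈ Finset.Icc 1 n, c :=
            Finset.sum_le_sum fun t ht => ((hω t (Finset.mem_Icc.mp ht).1).1).2
        _ = n * c := by
            rw [Finset.sum_const, nsmul_eq_mul, Nat.card_Icc]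
            simp
    have hsy : (0:ℝ) ≤ ∑ t ∈ Finset.Icc 1 n, y t ω :=
      Finset.sum_nonneg fun t ht => ((hω t (Finset.mem_Icc.mp ht).1).2).1
    have h1 : (∑ t ∈ Finset.Icc 1 n, x t ω) / (1 + ε)
        - (∑ t ∈ Finset.Icc 1 n, y t ω) / (1 - ε) ≤ (n * c) / (1 + ε) := by
      have hd : (0:ℝ) ≤ (∑ t ∈ Finset.Icc 1 n, y t ω) / (1 - ε) := by positivity
      have : (∑ t ∈ Finset.Icc 1 n, x t ω) / (1 + ε) ≤ (n * c) / (1 + ε) := by gcongr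
      linarith
    have h2 : (L / c) * ((n:ℝ) * c / (1 + ε)) = L * n / (1 + ε) := by
      field_simp
    calc g n ω ≤ (L / c) * ((n:ℝ) * c / (1 + ε)) := by
          have : 0 ≤ L / c := by positivity
          exact mul_le_mul_of_nonneg_left h1 this
      _ = L * n / (1 + ε) := h2
  -- integrability of M n
  have hMint : ∀ n, Integrable (M n) P := by
    intro n
    refine Integrable.mono' (integrable_const (Real.exp (L * n / (1 + ε))))
      (((hMm n).le (ℱ.le n)).aestronglyMeasurable) ?_
    filter_upwards [hgb n] with ω hω
    rw [hMdef]
    simp only [Real.norm_eq_abs, Real.abs_exp]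
    exact Real.exp_le_exp.mpr hω
  -- increments
  have hinc : ∀ n ω, g (n + 1) ω = g n ω + (p * x (n + 1) ω + q * y (n + 1) ω) := by
    intro n ω
    rw [hgdef]
    simp only
    rw [Finset.sum_Icc_succ_top (Nat.le_add_left 1 n),
      Finset.sum_Icc_succ_top (Nat.le_add_left 1 n), hpdef, hqdef, hLdef]
    field_simp
    ring
  have hMR : ∀ n, M (n + 1) =
      fun ω => M n ω * Real.exp (p * x (n + 1) ω + q * y (n + 1) ω) := by
    intro n
    funext ω
    rw [hMdef]
    simp only
    rw [hinc n ω, Real.exp_add]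
  -- pointwise a.e. bound on the increment factor
  have hexp_pc : Real.exp (p * c) = 1 + ε := by
    have : p * c = Real.log (1 + ε) := by rw [hpdef]; field_simp
    rw [this, Real.exp_log h1ε]
  have hqc : q * c = -(L / (1 - ε)) := by
    rw [hqdef]; field_simp
  have hRle : ∀ n, ∀ᵐ ω ∂P,
      Real.exp (p * x (n + 1) ω + q * y (n + 1) ω) ≤
        1 + (ε / c) * x (n + 1) ω - (ε / c) * y (n + 1) ω := by
    intro n
    filter_upwards [hxb (n + 1) (Nat.le_add_left 1 n), hyb (n + 1) (Nat.le_add_left 1 n)]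
      with ω hx hy
    obtain ⟨hx0, hxc⟩ := hx
    obtain ⟨hy0, hyc⟩ := hy
    have hux0 : 0 ≤ x (n + 1) ω / c := by positivity
    have hux1 : x (n + 1) ω / c ≤ 1 := (div_le_one hc).mpr hxc
    have huy0 : 0 ≤ y (n + 1) ω / c := by positivity
    have huy1 : y (n + 1) ω / c ≤ 1 := (div_le_one hc).mpr hyc
    have e1 : Real.exp (p * x (n + 1) ω) ≤ 1 + ε * (x (n + 1) ω / c) := by
      have h := exp_le_affine (θ := p * c) hux0 hux1
      rw [hexp_pc] at h
      have harg : p * c * (x (n + 1) ω / c) = p * x (n + 1) ω := by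
        field_simp
      rw [harg] at h
      linarith
    set d : ℝ := Real.exp (q * c) - 1 with hddef
    have e2 : Real.exp (q * y (n + 1) ω) ≤ 1 + d * (y (n + 1) ω / c) := by
      have h := exp_le_affine (θ := q * c) huy0 huy1
      have harg : q * c * (y (n + 1) ω / c) = q * y (n + 1) ω := by
        field_simp
      rw [harg] at h
      exact h
    have hd : d ≤ -ε := by
      have := hqc ▸ hkey
      rw [hddef, hqc]
      linarith
    have hb1 : (0:ℝ) ≤ 1 + ε * (x (n + 1) ω / c) := by positivity
    have hprod : Real.exp (p * x (n + 1) ω + q * y (n + 1) ω) ≤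
        (1 + ε * (x (n + 1) ω / c)) * (1 + d * (y (n + 1) ω / c)) := by
      rw [Real.exp_add]
      exact mul_le_mul e1 e2 (Real.exp_pos _).le hb1
    have hexpand : (1 + ε * (x (n + 1) ω / c)) * (1 + d * (y (n + 1) ω / c)) ≤
        1 + (ε / c) * x (n + 1) ω - (ε / c) * y (n + 1) ω := by
      have t1 : d * (y (n + 1) ω / c) ≤ -ε * (y (n + 1) ω / c) :=
        mul_le_mul_of_nonneg_right hd huy0
      have t2 : ε * (x (n + 1) ω / c) * (d * (y (n + 1) ω / c)) ≤ 0 := by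
        apply mul_nonpos_of_nonneg_of_nonpos
        · positivity
        · have : d < 0 := by linarith
          exact mul_nonpos_of_nonpos_of_nonneg this.le huy0
      have t3 : ε * (x (n + 1) ω / c) = (ε / c) * x (n + 1) ω := by ring
      have t4 : ε * (y (n + 1) ω / c) = (ε / c) * y (n + 1) ω := by ring
      nlinarith [t1, t2]
    linarith
  -- integrability of increments and bounds
  have hXint : ∀ n, 1 ≤ n → Integrable (x n) P := by
    intro n hn
    refine Integrable.mono' (integrable_const c)
      (((hxm n hn).le (ℱ.le n)).aestronglyMeasurable) ?_
    filter_upwards [hxb n hn] with ω hω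
    rw [Real.norm_eq_abs, abs_le]
    exact ⟨by linarith [hω.1], hω.2⟩
  have hYint : ∀ n, 1 ≤ n → Integrable (y n) P := by
    intro n hn
    refine Integrable.mono' (integrable_const c)
      (((hym n hn).le (ℱ.le n)).aestronglyMeasurable) ?_
    filter_upwards [hyb n hn] with ω hω
    rw [Real.norm_eq_abs, abs_le]
    exact ⟨by linarith [hω.1], hω.2⟩
  have hRint : ∀ n, Integrable
      (fun ω => Real.exp (p * x (n + 1) ω + q * y (n + 1) ω)) P := by
    intro n
    have hmeas : Measurable fun ω => Real.exp (p * x (n + 1) ω + q * y (n + 1) ω) := by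
      apply Real.measurable_exp.comp
      exact ((((hxm (n+1) (Nat.le_add_left 1 n)).le (ℱ.le _)).const_mul p).add
        (((hym (n+1) (Nat.le_add_left 1 n)).le (ℱ.le _)).const_mul q))
    refine Integrable.mono' (integrable_const (Real.exp (p * c)))
      hmeas.aestronglyMeasurable ?_
    filter_upwards [hxb (n + 1) (Nat.le_add_left 1 n), hyb (n + 1) (Nat.le_add_left 1 n)]
      with ω hx hy
    rw [Real.norm_eq_abs, Real.abs_exp]
    apply Real.exp_le_exp.mpr
    have hp0 : 0 ≤ p := by rw [hpdef]; positivity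
    have hq0 : q ≤ 0 := by
      rw [hqdef]
      simp only [neg_nonpos]
      positivity
    have t1 : p * x (n + 1) ω ≤ p * c := mul_le_mul_of_nonneg_left hx.2 hp0
    have t2 : q * y (n + 1) ω ≤ 0 := mul_nonpos_of_nonpos_of_nonneg hq0 hy.1
    linarith
  have hhint : ∀ n, Integrable
      (fun ω => 1 + (ε / c) * x (n + 1) ω - (ε / c) * y (n + 1) ω) P := by
    intro n
    exact (((integrable_const (1:ℝ)).add
      ((hXint (n+1) (Nat.le_add_left 1 n)).const_mul (ε / c))).sub
      ((hYint (n+1) (Nat.le_add_left 1 n)).const_mul (ε / c)))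
  -- conditional expectation step
  have hstep : ∀ n, P[M (n + 1)|ℱ n] ≤ᵐ[P] M n := by
    intro n
    have h1n : (1:ℕ) ≤ n + 1 := Nat.le_add_left 1 n
    set R : Ω → ℝ := fun ω => Real.exp (p * x (n + 1) ω + q * y (n + 1) ω) with hRdef
    have hMRint : Integrable (M n * R) P := by
      have h := hMint (n + 1)
      rw [hMR n] at h
      exact h
    have h1 : P[M (n + 1)|ℱ n] =ᵐ[P] M n * P[R|ℱ n] := by
      rw [hMR n]
      exact condExp_mul_of_stronglyMeasurable_left (hadp n) hMRint (hRint n)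
    have h2 : P[R|ℱ n] ≤ᵐ[P]
        P[(fun ω => 1 + (ε / c) * x (n + 1) ω - (ε / c) * y (n + 1) ω)|ℱ n] :=
      condExp_mono (hRint n) (hhint n) (hRle n)
    have hintc : Integrable (fun _ : Ω => (1:ℝ)) P := integrable_const 1
    have hintX : Integrable ((ε / c) • x (n + 1)) P := (hXint _ h1n).smul _
    have hintY : Integrable ((ε / c) • y (n + 1)) P := (hYint _ h1n).smul _
    have hadd : (fun ω => 1 + (ε / c) * x (n + 1) ω - (ε / c) * y (n + 1) ω)
        = ((fun _ : Ω => (1:ℝ)) + (ε / c) • x (n + 1)) - (ε / c) • y (n + 1) := by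
      funext ω
      simp only [Pi.sub_apply, Pi.add_apply, Pi.smul_apply, smul_eq_mul]
    have h3 : P[(fun ω => 1 + (ε / c) * x (n + 1) ω - (ε / c) * y (n + 1) ω)|ℱ n]
        ≤ᵐ[P] fun _ => (1:ℝ) := by
      rw [hadd]
      filter_upwards [condExp_sub (hintc.add hintX) hintY (ℱ n),
        condExp_add hintc hintX (ℱ n),
        condExp_smul (μ := P) (m := ℱ n) (ε / c) (x (n + 1)),
        condExp_smul (μ := P) (m := ℱ n) (ε / c) (y (n + 1)),
        hcond (n + 1) h1n] with ω e1 e2 e4 e5 e6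
      have e3 := congrFun (condExp_const (ℱ.le n) (1:ℝ) (μ := P)) ω
      have hc6 : (P[x (n + 1)|ℱ n]) ω ≤ (P[y (n + 1)|ℱ n]) ω := e6
      rw [Pi.sub_apply] at e1
      rw [Pi.add_apply] at e2
      rw [e1, e2, e3, e4, e5]
      simp only [Pi.smul_apply, smul_eq_mul]
      have hεc : (0:ℝ) ≤ ε / c := by positivity
      have := mul_le_mul_of_nonneg_left hc6 hεc
      linarith
    filter_upwards [h1, h2, h3] with ω e1 e2 e3
    rw [e1, Pi.mul_apply]
    have hM0 : 0 ≤ M n ω := (Real.exp_pos _).le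
    calc M n ω * (P[R|ℱ n]) ω ≤ M n ω * 1 :=
          mul_le_mul_of_nonneg_left (e2.trans e3) hM0
      _ = M n ω := mul_one _
  have hsuper : Supermartingale M ℱ P := supermartingale_nat hadp hMint hstep
  have hnn : ∀ n, 0 ≤ᵐ[P] M n := fun n =>
    Filter.Eventually.of_forall fun ω => (Real.exp_pos _).le
  have hM01 : ∫ ω, M 0 ω ∂P ≤ 1 := by
    have hM0 : M 0 = fun _ => (1:ℝ) := by
      funext ω
      show Real.exp (g 0 ω) = 1
      have hg0 : g 0 ω = 0 := by
        show L / c * ((∑ t ∈ Finset.Icc 1 0, x t ω) / (1 + ε)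
          - (∑ t ∈ Finset.Icc 1 0, y t ω) / (1 - ε)) = 0
        rw [Finset.Icc_eq_empty_of_lt Nat.zero_lt_one]
        simp
      rw [hg0, Real.exp_zero]
    rw [hM0]
    simp
  have hA : (0:ℝ) < Real.exp (L * (ε * μ)) := Real.exp_pos _
  have hV := ville_ineq P ℱ hsuper hnn hM01 hA
  have hsub : { ω | ∃ n, 1 ≤ n ∧
      (∑ t ∈ Finset.Icc 1 n, x t ω) / (1 + ε)
        - (∑ t ∈ Finset.Icc 1 n, y t ω) / (1 - ε) ≥ ε * μ * c } ⊆
      {ω | ∃ n, Real.exp (L * (ε * μ)) ≤ M n ω} := by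
    rintro ω ⟨n, hn, hge⟩
    refine ⟨n, ?_⟩
    apply Real.exp_le_exp.mpr
    have he : L * (ε * μ) = (L / c) * (ε * μ * c) := by field_simp
    rw [he]
    exact mul_le_mul_of_nonneg_left hge (by positivity)
  calc P { ω | ∃ n, 1 ≤ n ∧
      (∑ t ∈ Finset.Icc 1 n, x t ω) / (1 + ε)
        - (∑ t ∈ Finset.Icc 1 n, y t ω) / (1 - ε) ≥ ε * μ * c }
      ≤ P {ω | ∃ n, Real.exp (L * (ε * μ)) ≤ M n ω} := measure_mono hsub
    _ ≤ ENNReal.ofReal (1 / Real.exp (L * (ε * μ))) := hV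
    _ = ENNReal.ofReal (Real.exp (-(L * (ε * μ)))) := by rw [Real.exp_neg, one_div]
    _ ≤ ENNReal.ofReal (Real.exp (-(ε ^ 2 * μ))) := by
        apply ENNReal.ofReal_le_ofReal
        apply Real.exp_le_exp.mpr
        nlinarith [mul_le_mul_of_nonneg_right hεL (mul_nonneg hε0.le hμ.le)]
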